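/- For every n ≥ 2, the number of subsets S of [n−1] whose run-length list L(S) = (l₁,…,l_k) satisfies lᵢ ≥ 2 for all 2 ≤ i ≤ k−1 equals 2·F_n, where F_n is the n-th Fibonacci number (with F₁ = F₂ = 1). -/

import Mathlib

def pat (S : Finset ℕ) (j : ℕ) : Prop :=
  ((j ∈ S) ↔ (j - 1 ∉ S)) ∧ ((j ∈ S) ↔ (j + 1 ∉ S))

instance pat.dec (S : Finset ℕ) (j : ℕ) : Decidable (pat S j) :=
  decidable_of_iff (((j ∈ S) ↔ (j - 1 ∉ S)) ∧ ((j ∈ S) ↔ (j + 1 ∉ S))) Iff.rfl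

def gset (u : ℕ) : Finset (Finset ℕ) :=
  @Finset.filter _ (fun S => ∀ j ∈ Finset.Icc 2 (u - 1), ¬ pat S j)
    (fun _ => Finset.decidableDforallFinset) ((Finset.Icc 1 u).powerset)

def cnt (u : ℕ) : ℕ := (gset u).card

lemma mem_gset {u : ℕ} {S : Finset ℕ} :
    S ∈ gset u ↔ S ⊆ Finset.Icc 1 u ∧ ∀ j, 2 ≤ j → j ≤ u - 1 → ¬ pat S j := by
  unfold gset
  simp [Finset.mem_filter, Finset.mem_powerset, Finset.mem_Icc, and_imp]

lemma cnt_one : cnt 1 = 2 := by decide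
lemma cnt_two : cnt 2 = 4 := by decide

lemma pat_congr {S T : Finset ℕ} {j : ℕ}
    (h1 : j - 1 ∈ S ↔ j - 1 ∈ T) (h2 : j ∈ S ↔ j ∈ T) (h3 : j + 1 ∈ S ↔ j + 1 ∈ T) :
    pat S j ↔ pat T j := by
  unfold pat; rw [h1, h2, h3]

lemma cnt_rec (m : ℕ) (hm : 1 ≤ m) : cnt (m + 2) = cnt (m + 1) + cnt m := by
  classical
  have hsplit := Finset.card_filter_add_card_filter_not
    (s := gset (m + 2)) (p := fun S => (m + 1 ∈ S ↔ m + 2 ∈ S))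
  rw [cnt, ← hsplit]
  congr 1
  · -- the last two positions agree : count is cnt (m+1)
    apply Finset.card_nbij' (fun S => S.erase (m + 2))
      (fun T => if m + 1 ∈ T then insert (m + 2) T else T)
    · intro S hS
      simp only [Finset.mem_coe, Finset.mem_filter] at hS
      obtain ⟨hg, hq⟩ := hS
      rw [mem_gset] at hg; rw [Finset.mem_coe, mem_gset]
      obtain ⟨hsub, hgood⟩ := hg
      have hx : ∀ x, x ≠ m + 2 → (x ∈ S.erase (m + 2) ↔ x ∈ S) := by
        intro x hxne; simp [Finset.mem_erase, hxne]
      constructor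
      · intro x hxE
        rw [Finset.mem_erase] at hxE
        have := hsub hxE.2
        rw [Finset.mem_Icc] at this ⊢
        omega
      · intro j hj2 hju
        have hju' : j ≤ m := by omega
        rw [pat_congr (hx (j - 1) (by omega)) (hx j (by omega)) (hx (j + 1) (by omega))]
        exact hgood j hj2 (by omega)
    · intro T hT
      rw [Finset.mem_coe, mem_gset] at hT
      obtain ⟨hsub, hgood⟩ := hT
      have hT1 : m + 2 ∉ T := fun h => by
        have := hsub h; rw [Finset.mem_Icc] at this; omega
      set E := if m + 1 ∈ T then insert (m + 2) T else T with hEdef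
      have hE : ∀ x, x ≠ m + 2 → (x ∈ E ↔ x ∈ T) := by
        intro x hxne
        by_cases hmem : m + 1 ∈ T <;>
          simp [hEdef, hmem, Finset.mem_insert, hxne]
      have hE2 : m + 2 ∈ E ↔ m + 1 ∈ T := by
        by_cases hmem : m + 1 ∈ T <;>
          simp [hEdef, hmem, Finset.mem_insert, hT1]
      simp only [Finset.mem_coe, Finset.mem_filter]
      refine ⟨?_, ?_⟩
      · rw [mem_gset]
        constructor
        · intro x hxE
          by_cases hx2 : x = m + 2
          · subst hx2; rw [Finset.mem_Icc]; omega
          · have := hsub ((hE x hx2).mp hxE)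
            rw [Finset.mem_Icc] at this ⊢; omega
        · intro j hj2 hju
          by_cases hj : j ≤ m
          · rw [pat_congr (hE (j - 1) (by omega)) (hE j (by omega)) (hE (j + 1) (by omega))]
            exact hgood j hj2 (by omega)
          · have hjeq : j = m + 1 := by omega
            subst hjeq
            intro hc
            have h2 := hc.2
            rw [hE (m + 1) (by omega), hE2] at h2
            exact iff_not_self h2
      · rw [hE (m + 1) (by omega), hE2]
    · intro S hS
      simp only [Finset.mem_coe, Finset.mem_filter] at hS
      obtain ⟨hg, hq⟩ := hS
      have hx : m + 1 ∈ S.erase (m + 2) ↔ m + 1 ∈ S := by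
        simp [Finset.mem_erase]
      by_cases hmem : m + 1 ∈ S
      · beta_reduce; rw [if_pos (hx.mpr hmem), Finset.insert_erase (hq.mp hmem)]
      · beta_reduce; rw [if_neg (fun h => hmem (hx.mp h)),
          Finset.erase_eq_of_notMem (fun h => hmem (hq.mpr h))]
    · intro T hT
      rw [Finset.mem_coe, mem_gset] at hT
      have hT1 : m + 2 ∉ T := fun h => by
        have := hT.1 h; rw [Finset.mem_Icc] at this; omega
      by_cases hmem : m + 1 ∈ T
      · beta_reduce; rw [if_pos hmem, Finset.erase_insert hT1]
      · beta_reduce; rw [if_neg hmem, Finset.erase_eq_of_notMem hT1]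
  · -- the last two positions differ : count is cnt m
    apply Finset.card_nbij' (fun S => (S.erase (m + 2)).erase (m + 1))
      (fun T => if m ∈ T then insert (m + 1) T else insert (m + 2) T)
    · intro S hS
      simp only [Finset.mem_coe, Finset.mem_filter] at hS
      obtain ⟨hg, hq⟩ := hS
      rw [mem_gset] at hg; rw [Finset.mem_coe, mem_gset]
      obtain ⟨hsub, hgood⟩ := hg
      have hx : ∀ x, x ≠ m + 1 → x ≠ m + 2 → ((x ∈ (S.erase (m + 2)).erase (m + 1)) ↔ x ∈ S) := by
        intro x h1 h2; simp [Finset.mem_erase, h1, h2]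
      constructor
      · intro x hxE
        simp only [Finset.mem_erase] at hxE
        have := hsub hxE.2.2
        rw [Finset.mem_Icc] at this ⊢
        omega
      · intro j hj2 hju
        have hju' : j ≤ m - 1 := by omega
        rw [pat_congr (hx (j - 1) (by omega) (by omega)) (hx j (by omega) (by omega))
          (hx (j + 1) (by omega) (by omega))]
        exact hgood j hj2 (by omega)
    · intro T hT
      rw [Finset.mem_coe, mem_gset] at hT
      obtain ⟨hsub, hgood⟩ := hT
      have hT1 : m + 1 ∉ T := fun h => by
        have := hsub h; rw [Finset.mem_Icc] at this; omega
      have hT2 : m + 2 ∉ T := fun h => by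
        have := hsub h; rw [Finset.mem_Icc] at this; omega
      set E := if m ∈ T then insert (m + 1) T else insert (m + 2) T with hEdef
      have hE : ∀ x, x ≠ m + 1 → x ≠ m + 2 → (x ∈ E ↔ x ∈ T) := by
        intro x h1 h2
        by_cases hmem : m ∈ T <;>
          simp [hEdef, hmem, Finset.mem_insert, h1, h2]
      have hE1 : m + 1 ∈ E ↔ m ∈ T := by
        by_cases hmem : m ∈ T <;>
          simp [hEdef, hmem, Finset.mem_insert, hT1]
      have hE2 : m + 2 ∈ E ↔ m ∉ T := by
        by_cases hmem : m ∈ T <;>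
          simp [hEdef, hmem, Finset.mem_insert, hT2]
      have hE0 : m ∈ E ↔ m ∈ T := hE m (by omega) (by omega)
      simp only [Finset.mem_coe, Finset.mem_filter]
      refine ⟨?_, ?_⟩
      · rw [mem_gset]
        constructor
        · intro x hxE
          by_cases h1 : x = m + 1
          · subst h1; rw [Finset.mem_Icc]; omega
          by_cases h2 : x = m + 2
          · subst h2; rw [Finset.mem_Icc]; omega
          · have := hsub ((hE x h1 h2).mp hxE)
            rw [Finset.mem_Icc] at this ⊢; omega
        · intro j hj2 hju
          by_cases hj : j + 1 ≤ m
          · rw [pat_congr (hE (j - 1) (by omega) (by omega)) (hE j (by omega) (by omega))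
              (hE (j + 1) (by omega) (by omega))]
            exact hgood j hj2 (by omega)
          by_cases hjm : j = m
          · subst hjm
            intro hc
            have h2 := hc.2
            rw [hE0, hE1] at h2
            exact iff_not_self h2
          · have hjeq : j = m + 1 := by omega
            subst hjeq
            intro hc
            have h1 := hc.1
            simp only [Nat.add_sub_cancel] at h1
            rw [hE1, hE0] at h1
            exact iff_not_self h1
      · rw [hE1, hE2]; exact iff_not_self
    · intro S hS
      simp only [Finset.mem_coe, Finset.mem_filter] at hS
      obtain ⟨hg, hq⟩ := hS
      rw [mem_gset] at hg
      obtain ⟨hsub, hgood⟩ := hg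
      have hkey := hgood (m + 1) (by omega) (by omega)
      have hiff2 : (m + 1 ∈ S) ↔ (m + 2 ∉ S) := by
        by_cases hA : m + 1 ∈ S <;> by_cases hB : m + 2 ∈ S
        · exact absurd (iff_of_true hA hB) hq
        · exact iff_of_true hA hB
        · exact iff_of_false hA (fun h => h hB)
        · exact absurd (iff_of_false hA hB) hq
      unfold pat at hkey
      simp only [Nat.add_sub_cancel] at hkey
      have hnot1 : ¬ ((m + 1 ∈ S) ↔ (m ∉ S)) := fun h => hkey ⟨h, hiff2⟩
      have hiff1 : (m + 1 ∈ S) ↔ (m ∈ S) := by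
        by_cases hA : m + 1 ∈ S <;> by_cases h0 : m ∈ S
        · exact iff_of_true hA h0
        · exact absurd (iff_of_true hA h0) hnot1
        · exact absurd (iff_of_false hA (not_not_intro h0)) hnot1
        · exact iff_of_false hA h0
      have hmE : m ∈ (S.erase (m + 2)).erase (m + 1) ↔ m ∈ S := by
        simp [Finset.mem_erase]
      by_cases h0 : m ∈ S
      · have h1 : m + 1 ∈ S := hiff1.mpr h0
        have h2 : m + 2 ∉ S := hiff2.mp h1
        beta_reduce; rw [if_pos (hmE.mpr h0), Finset.erase_eq_of_notMem h2, Finset.insert_erase h1]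
      · have h1 : m + 1 ∉ S := fun h => h0 (hiff1.mp h)
        have h2 : m + 2 ∈ S := by
          by_contra hB; exact h1 (hiff2.mpr hB)
        beta_reduce; rw [if_neg (fun h => h0 (hmE.mp h)),
          Finset.erase_eq_of_notMem (show m + 1 ∉ S.erase (m + 2) by
            simp [Finset.mem_erase, h1]),
          Finset.insert_erase h2]
    · intro T hT
      rw [Finset.mem_coe, mem_gset] at hT
      have hT1 : m + 1 ∉ T := fun h => by
        have := hT.1 h; rw [Finset.mem_Icc] at this; omega
      have hT2 : m + 2 ∉ T := fun h => by
        have := hT.1 h; rw [Finset.mem_Icc] at this; omega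
      by_cases hmem : m ∈ T
      · beta_reduce; rw [if_pos hmem,
          Finset.erase_eq_of_notMem (show m + 2 ∉ insert (m + 1) T by
            simp [Finset.mem_insert, hT2]),
          Finset.erase_insert hT1]
      · beta_reduce; rw [if_neg hmem, Finset.erase_insert hT2, Finset.erase_eq_of_notMem hT1]

lemma cnt_fib (m : ℕ) : cnt (m + 1) = 2 * Nat.fib (m + 2) := by
  have key : ∀ k : ℕ, cnt (k + 1) = 2 * Nat.fib (k + 2) ∧ cnt (k + 2) = 2 * Nat.fib (k + 3) := by
    intro k
    induction k with
    | zero => exact ⟨by rw [cnt_one]; rfl, by rw [cnt_two]; rfl⟩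
    | succ i ih =>
      refine ⟨ih.2, ?_⟩
      have hrec : cnt (i + 3) = cnt (i + 2) + cnt (i + 1) := cnt_rec (i + 1) (by omega)
      have hfib : Nat.fib (i + 4) = Nat.fib (i + 2) + Nat.fib (i + 3) := Nat.fib_add_two
      show cnt (i + 3) = 2 * Nat.fib (i + 4)
      rw [hrec, ih.1, ih.2, hfib]
      ring
  exact (key m).1

theorem stmt_2 (n : ℕ) (hn : 2 ≤ n) :
    Nat.card {S : Finset ℕ // S ⊆ Finset.Icc 1 (n - 1) ∧
      ∀ j : ℕ, 2 ≤ j → j ≤ n - 2 →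
        ¬ (((j ∈ S) ↔ (j - 1 ∉ S)) ∧ ((j ∈ S) ↔ (j + 1 ∉ S)))} =
    2 * Nat.fib n := by
  obtain ⟨k, rfl⟩ : ∃ k, n = k + 2 := ⟨n - 2, by omega⟩
  have hiff : ∀ S : Finset ℕ,
      (S ⊆ Finset.Icc 1 (k + 2 - 1) ∧
        ∀ j : ℕ, 2 ≤ j → j ≤ k + 2 - 2 →
          ¬ (((j ∈ S) ↔ (j - 1 ∉ S)) ∧ ((j ∈ S) ↔ (j + 1 ∉ S)))) ↔ S ∈ gset (k + 1) := by
    intro S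
    rw [mem_gset]
    constructor
    · rintro ⟨h1, h2⟩
      exact ⟨by simpa using h1, fun j hj2 hju => h2 j hj2 (by omega)⟩
    · rintro ⟨h1, h2⟩
      exact ⟨by simpa using h1, fun j hj2 hju => h2 j hj2 (by omega)⟩
  rw [Nat.card_congr (Equiv.subtypeEquivRight hiff)]
  rw [Nat.card_eq_finsetCard]
  have h := cnt_fib k
  rw [cnt] at h
  omega
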